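/- The should-testing compliance relation ⊣shd is a fix-compliance relation, i.e. F(⊣shd) = ⊣shd. -/

import Mathlib

/-- A labelled transition system of contracts: states `U`, visible actions `Act`
partitioned into outputs (`isOut`) and inputs, with a dual involution swapping
inputs and outputs; transitions carry `Option Act` labels (`none` is the
internal action τ); `zero` is the unique state with no outgoing transitions. -/
structure CLTS where
  U : Type
  Act : Type
  isOut : Act → Prop
  dual : Act → Act
  dual_dual : ∀ a, dual (dual a) = a
  dual_flip : ∀ a, isOut (dual a) ↔ ¬ isOut a
  tr : U → Option Act → U → Prop
  zero : U
  zero_no_trans : ∀ l p', ¬ tr zero l p'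
  no_trans_eq_zero : ∀ p, (∀ l p', ¬ tr p l p') → p = zero

namespace CLTS

variable (M : CLTS)

/-- One-step τ-reduction of a client/server pair (τ-transition of `p | q`). -/
def Step (c c' : M.U × M.U) : Prop :=
  (M.tr c.1 none c'.1 ∧ c'.2 = c.2) ∨
  (c'.1 = c.1 ∧ M.tr c.2 none c'.2) ∨
  (∃ a, M.tr c.1 (some a) c'.1 ∧ M.tr c.2 (some (M.dual a)) c'.2)

/-- A pair is stuck if it has no one-step τ-reduction. -/
def Stuck (c : M.U × M.U) : Prop := ∀ c', ¬ M.Step c c'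

/-- Reflexive-transitive closure of one-step τ-reduction. -/
def Steps : M.U × M.U → M.U × M.U → Prop := Relation.ReflTransGen M.Step

/-- Successful pairs: the client has terminated. -/
def Succ : Set (M.U × M.U) := {c | c.1 = M.zero}

/-- The compliance functional. -/
def F (x : Set (M.U × M.U)) : Set (M.U × M.U) :=
  M.Succ ∪ {c | ¬ M.Stuck c ∧ ∀ c', M.Step c c' → c' ∈ x}

/-- Progress compliance. -/
def Pg (p q : M.U) : Prop :=
  ∀ p' q', M.Steps (p, q) (p', q') → M.Stuck (p', q') → p' = M.zero

/-- Progress compliance, as a set of pairs. -/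
def pgRel : Set (M.U × M.U) := {c | M.Pg c.1 c.2}

/-- Must-testing compliance: every maximal τ-trace (encoded as a sequence which,
once stuck, stays put) reaches a successful pair. -/
def Mst (p q : M.U) : Prop :=
  ∀ s : ℕ → M.U × M.U, s 0 = (p, q) →
    (∀ n, M.Step (s n) (s (n + 1)) ∨ (M.Stuck (s n) ∧ s (n + 1) = s n)) →
    ∃ i, (s i).1 = M.zero

/-- Must-testing compliance, as a set of pairs. -/
def mstRel : Set (M.U × M.U) := {c | M.Mst c.1 c.2}

/-- Should-testing compliance. -/
def Shd (p q : M.U) : Prop :=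
  ∀ p' q', M.Steps (p, q) (p', q') → ∃ q'', M.Steps (p', q') (M.zero, q'')

/-- Should-testing compliance, as a set of pairs. -/
def shdRel : Set (M.U × M.U) := {c | M.Shd c.1 c.2}

/-- τ-transition on single states. -/
def TauStep (r r' : M.U) : Prop := M.tr r none r'

/-- Reflexive-transitive closure of τ-transitions on single states. -/
def TauSteps : M.U → M.U → Prop := Relation.ReflTransGen M.TauStep

/-- `r` may diverge: it has an infinite internal computation. -/
def Diverges (r : M.U) : Prop :=
  ∃ s : ℕ → M.U, s 0 = r ∧ ∀ n, M.TauStep (s n) (s (n + 1))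

/-- Behavioural compliance. -/
def Beh (p q : M.U) : Prop :=
  ∀ p' q', M.Steps (p, q) (p', q') →
    (M.Stuck (p', q') → p' = M.zero) ∧ (M.Diverges q' → M.TauSteps p' M.zero)

/-- Behavioural compliance, as a set of pairs. -/
def behRel : Set (M.U × M.U) := {c | M.Beh c.1 c.2}

/-- Weak barb on a visible action. -/
def WBarb (p : M.U) (a : M.Act) : Prop :=
  ∃ p₁ p₂, M.TauSteps p p₁ ∧ M.tr p₁ (some a) p₂

/-- I/O compliance. -/
def Io (p q : M.U) : Prop :=
  ∀ p' q', M.Steps (p, q) (p', q') →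
    (∀ a, M.isOut a → M.WBarb p' a → M.WBarb q' (M.dual a)) ∧
    (((¬ ∃ a, M.isOut a ∧ M.WBarb p' a) ∧ (∃ a, ¬ M.isOut a ∧ M.WBarb p' a)) →
      ((∃ a, M.isOut a ∧ M.WBarb q' a) ∧
       ∀ a, M.isOut a → M.WBarb q' a → M.WBarb p' (M.dual a)))

/-- I/O compliance, as a set of pairs. -/
def ioRel : Set (M.U × M.U) := {c | M.Io c.1 c.2}

/-- May-testing compliance. -/
def May (p q : M.U) : Prop := ∃ q', M.Steps (p, q) (M.zero, q')

/-- May-testing compliance, as a set of pairs. -/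
def mayRel : Set (M.U × M.U) := {c | M.May c.1 c.2}

end CLTS


lemma steps_zero_fst (M : CLTS) {c c' : M.U × M.U} (h : M.Steps c c')
    (hz : c.1 = M.zero) : c'.1 = M.zero := by
  induction h with
  | refl => exact hz
  | tail _ hs ih =>
    rcases hs with ⟨ht, _⟩ | ⟨he, _⟩ | ⟨a, ht, _⟩
    · exact absurd ht (by rw [ih] at ht ⊢; exact M.zero_no_trans _ _)
    · rw [he, ih]
    · rw [ih] at ht; exact absurd ht (M.zero_no_trans _ _)

/-- should-testing compliance is a fix-compliance relation. -/
theorem shd_fix_compliance (M : CLTS) : M.F M.shdRel = M.shdRel := by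
  ext c
  obtain ⟨p, q⟩ := c
  constructor
  · rintro (hsucc | ⟨hns, hsucc⟩)
    · intro p' q' hst
      have h0 : p' = M.zero := steps_zero_fst M hst hsucc
      exact ⟨q', by rw [h0]; exact Relation.ReflTransGen.refl⟩
    · intro p' q' hst
      rcases hst.cases_head with heq | ⟨c₀, h1, h2⟩
      · injection heq with h1 h2
        subst h1; subst h2
        obtain ⟨c₀, hc₀⟩ := not_forall.1 hns
        have hc₀' : M.Step (p, q) c₀ := not_not.1 hc₀
        obtain ⟨q'', hq''⟩ := hsucc c₀ hc₀' c₀.1 c₀.2 Relation.ReflTransGen.refl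
        exact ⟨q'', Relation.ReflTransGen.head hc₀' hq''⟩
      · exact hsucc c₀ h1 p' q' h2
  · intro hshd
    by_cases hz : p = M.zero
    · exact Or.inl hz
    · refine Or.inr ⟨?_, ?_⟩
      · intro hstuck
        obtain ⟨q'', hq''⟩ := hshd p q Relation.ReflTransGen.refl
        rcases hq''.cases_head with heq | ⟨c₀, h1, _⟩
        · exact hz (congrArg Prod.fst heq)
        · exact hstuck c₀ h1
      · intro c' hstep p' q' hst
        exact hshd p' q' (Relation.ReflTransGen.head hstep (by simpa [CLTS.Steps] using hst))
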